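/- arXiv:2605.18717 — 2 statements merged into one kernel-verified Lean document; each statement's English description precedes it below -/
import Mathlib

section
/- Let p be a prime, W ∈ L¹(ℤ_p), Z ∈ L¹(ℤ_p), α > 0, and φ : ℝ → ℝ Lipschitz with constant L_φ with L_φ‖W‖₁/α < 1. Then the equation U(x) = (1/α) φ(∫_{ℤ_p} W(|x−y|_p) U(y) dy + Z(x)) has a unique solution U ∈ L¹(ℤ_p). -/
open MeasureTheory
open scoped Convolution

noncomputable instance (p : ℕ) [Fact p.Prime] : MeasurableSpace ℤ_[p] := borel _
instance (p : ℕ) [Fact p.Prime] : BorelSpace ℤ_[p] := ⟨rfl⟩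

/-- The normalized Haar measure on the compact additive group ℤ_p (total mass 1). -/
noncomputable def haarZp (p : ℕ) [Fact p.Prime] : Measure ℤ_[p] :=
  Measure.addHaarMeasure ⟨⟨Set.univ, isCompact_univ⟩, by simp⟩

instance haarZp_isAddHaar (p : ℕ) [Fact p.Prime] : (haarZp p).IsAddHaarMeasure :=
  Measure.isAddHaarMeasure_addHaarMeasure _

section Aux

variable {p : ℕ} [Fact p.Prime]

local notation "μ" => haarZp p
local notation "Lmul" => ContinuousLinearMap.mul ℝ ℝ

/-- The convolution written as in the statement. -/
lemma conv_eq (W f : ℤ_[p] → ℝ) (x : ℤ_[p]) :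
    (f ⋆[Lmul, μ] W) x = ∫ y, W (x - y) * f y ∂μ := by
  simp_rw [convolution_def, ContinuousLinearMap.mul_apply', mul_comm]

lemma conv_congr {W f g : ℤ_[p] → ℝ} (h : f =ᵐ[μ] g) :
    (f ⋆[Lmul, μ] W) = (g ⋆[Lmul, μ] W) := by
  funext x
  simp_rw [convolution_def]
  refine integral_congr_ae (h.mono fun t ht => ?_)
  dsimp only
  rw [ht]

/-- L¹ norm bound for the convolution. -/
lemma conv_norm_bound {W f : ℤ_[p] → ℝ} (hW : Integrable W μ) (hf : Integrable f μ) :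
    ∫ x, ‖(f ⋆[Lmul, μ] W) x‖ ∂μ ≤ (∫ x, ‖f x‖ ∂μ) * ∫ x, ‖W x‖ ∂μ := by
  have hex : ∀ᵐ x ∂μ, ConvolutionExistsAt f W x Lmul μ := hf.ae_convolution_exists Lmul hW
  have h1 : Integrable (f ⋆[Lmul, μ] W) μ := hf.integrable_convolution Lmul hW
  have h2 : Integrable ((fun x => ‖f x‖) ⋆[Lmul, μ] fun x => ‖W x‖) μ :=
    hf.norm.integrable_convolution Lmul hW.norm
  have hpt : ∀ᵐ x ∂μ, ‖(f ⋆[Lmul, μ] W) x‖ ≤ ((fun x => ‖f x‖) ⋆[Lmul, μ] fun x => ‖W x‖) x := by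
    filter_upwards [hex] with x hx
    calc ‖(f ⋆[Lmul, μ] W) x‖ ≤ ∫ t, ‖f t * W (x - t)‖ ∂μ := by
          simpa [convolution_def] using
            norm_integral_le_integral_norm (fun t => f t * W (x - t))
      _ = ((fun x => ‖f x‖) ⋆[Lmul, μ] fun x => ‖W x‖) x := by
          simp [convolution_def, norm_mul]
  calc ∫ x, ‖(f ⋆[Lmul, μ] W) x‖ ∂μ
      ≤ ∫ x, ((fun x => ‖f x‖) ⋆[Lmul, μ] fun x => ‖W x‖) x ∂μ :=
        integral_mono_ae h1.norm h2 hpt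
    _ = (∫ x, ‖f x‖ ∂μ) * ∫ x, ‖W x‖ ∂μ := by
        rw [integral_convolution Lmul hf.norm hW.norm]
        simp

/-- a.e. linearity of convolution in the first variable. -/
lemma conv_sub {W f g : ℤ_[p] → ℝ} (hW : Integrable W μ) (hf : Integrable f μ)
    (hg : Integrable g μ) :
    ∀ᵐ x ∂μ, (f ⋆[Lmul, μ] W) x - (g ⋆[Lmul, μ] W) x = ((f - g) ⋆[Lmul, μ] W) x := by
  filter_upwards [hf.ae_convolution_exists Lmul hW, hg.ae_convolution_exists Lmul hW]
    with x hxf hxg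
  have hxfg : ConvolutionExistsAt (f - g) W x Lmul μ := by
    refine (hxf.sub hxg).congr (Filter.Eventually.of_forall fun t => ?_)
    simp [sub_mul]
  have h3 : (((f - g) + g) ⋆[Lmul, μ] W) x = ((f - g) ⋆[Lmul, μ] W) x + (g ⋆[Lmul, μ] W) x :=
    hxfg.add_distrib hxg
  rw [sub_add_cancel] at h3
  linarith

lemma stmt3_aux (α : ℝ) (hα : 0 < α)
    (W : ℤ_[p] → ℝ) (hW : Integrable W μ)
    (Z : ℤ_[p] → ℝ) (hZ : Integrable Z μ)
    (Lφ : NNReal) (φ : ℝ → ℝ) (hφ : LipschitzWith Lφ φ)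
    (hcontr : (Lφ : ℝ) * (∫ x, ‖W x‖ ∂μ) / α < 1) :
    ∃ U : ℤ_[p] → ℝ, (Integrable U μ ∧
        U =ᵐ[μ]
          fun x => (1 / α) * φ ((∫ y, W (x - y) * U y ∂μ) + Z x)) ∧
      ∀ V : ℤ_[p] → ℝ, Integrable V μ →
        (V =ᵐ[μ]
          fun x => (1 / α) * φ ((∫ y, W (x - y) * V y ∂μ) + Z x)) →
        V =ᵐ[μ] U := by
  set I := ∫ x, ‖W x‖ ∂μ with hI
  have hI0 : 0 ≤ I := integral_nonneg fun x => norm_nonneg _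
  -- the nonlinear map on functions
  set N : (ℤ_[p] → ℝ) → (ℤ_[p] → ℝ) :=
    fun f x => (1 / α) * φ ((f ⋆[Lmul, μ] W) x + Z x) with hN
  have hNeq : ∀ f : ℤ_[p] → ℝ,
      N f = fun x => (1 / α) * φ ((∫ y, W (x - y) * f y ∂μ) + Z x) := by
    intro f; funext x; simp only [hN]; rw [conv_eq]
  have hNcongr : ∀ f g : ℤ_[p] → ℝ, f =ᵐ[μ] g → N f = N g := by
    intro f g h; funext x; simp only [hN]
    rw [conv_congr (W := W) h]
  -- integrability of N f
  have hNint : ∀ f : ℤ_[p] → ℝ, Integrable f μ → Integrable (N f) μ := by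
    intro f hf
    have hconv : Integrable (f ⋆[Lmul, μ] W) μ := hf.integrable_convolution Lmul hW
    have h1 : Integrable (fun x => (f ⋆[Lmul, μ] W) x + Z x) μ := hconv.add hZ
    have h2 : AEStronglyMeasurable (fun x => φ ((f ⋆[Lmul, μ] W) x + Z x)) μ :=
      hφ.continuous.comp_aestronglyMeasurable h1.aestronglyMeasurable
    have h3 : Integrable (fun x => φ ((f ⋆[Lmul, μ] W) x + Z x)) μ := by
      refine Integrable.mono' ((integrable_const ‖φ 0‖).add (h1.norm.const_mul (Lφ : ℝ))) h2
        (Filter.Eventually.of_forall fun x => ?_)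
      set t := (f ⋆[Lmul, μ] W) x + Z x
      calc ‖φ t‖ ≤ ‖φ 0‖ + ‖φ t - φ 0‖ := by
            simpa using norm_add_le (φ 0) (φ t - φ 0)
        _ ≤ ‖φ 0‖ + (Lφ : ℝ) * ‖t‖ := by
            have := hφ.dist_le_mul t 0
            rw [Real.dist_eq, Real.dist_eq, sub_zero] at this
            have h4 : |φ t - φ 0| ≥ ‖φ t - φ 0‖ := le_of_eq rfl
            simp only [Real.norm_eq_abs] at *
            linarith
    exact h3.const_mul _
  -- the map on L¹
  set T : (ℤ_[p] →₁[μ] ℝ) → (ℤ_[p] →₁[μ] ℝ) :=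
    fun f => (hNint _ (L1.integrable_coeFn f)).toL1 _ with hT
  have hTcoe : ∀ f : ℤ_[p] →₁[μ] ℝ, (T f : ℤ_[p] → ℝ) =ᵐ[μ] N f :=
    fun f => Integrable.coeFn_toL1 _
  -- contraction constant
  set K : NNReal := ⟨(Lφ : ℝ) * I / α, by positivity⟩ with hKdef
  have hK1 : K < 1 := by
    rw [← NNReal.coe_lt_one]; exact hcontr
  have hlip : LipschitzWith K T := by
    refine LipschitzWith.of_dist_le_mul fun f g => ?_
    have hf := L1.integrable_coeFn f
    have hg := L1.integrable_coeFn g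
    have hh : Integrable (⇑f - ⇑g) μ := hf.sub hg
    have hconvh : Integrable ((⇑f - ⇑g) ⋆[Lmul, μ] W) μ := hh.integrable_convolution Lmul hW
    have hdist1 : dist (T f) (T g) = ∫ x, dist (N f x) (N g x) ∂μ := by
      rw [L1.dist_eq_integral_dist]
      refine integral_congr_ae ?_
      filter_upwards [hTcoe f, hTcoe g] with x h1 h2
      rw [h1, h2]
    rw [hdist1]
    have hptbd : ∀ᵐ x ∂μ,
        dist (N f x) (N g x) ≤ ((Lφ : ℝ) / α) * ‖((⇑f - ⇑g) ⋆[Lmul, μ] W) x‖ := by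
      filter_upwards [conv_sub hW hf hg] with x hx
      have hab : dist ((⇑f ⋆[Lmul, μ] W) x + Z x) ((⇑g ⋆[Lmul, μ] W) x + Z x)
          = ‖((⇑f - ⇑g) ⋆[Lmul, μ] W) x‖ := by
        rw [Real.dist_eq, add_sub_add_right_eq_sub, ← Real.norm_eq_abs, hx]
      have h2 := hφ.dist_le_mul ((⇑f ⋆[Lmul, μ] W) x + Z x) ((⇑g ⋆[Lmul, μ] W) x + Z x)
      rw [hab] at h2
      have h1α : (0:ℝ) ≤ 1 / α := by positivity
      have hd : dist (N f x) (N g x)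
          = (1 / α) * dist (φ ((⇑f ⋆[Lmul, μ] W) x + Z x)) (φ ((⇑g ⋆[Lmul, μ] W) x + Z x)) := by
        simp only [hN, Real.dist_eq, ← mul_sub, abs_mul, abs_of_nonneg h1α]
      rw [hd]
      calc (1 / α) * dist (φ ((⇑f ⋆[Lmul, μ] W) x + Z x)) (φ ((⇑g ⋆[Lmul, μ] W) x + Z x))
          ≤ (1 / α) * ((Lφ : ℝ) * ‖((⇑f - ⇑g) ⋆[Lmul, μ] W) x‖) :=
            mul_le_mul_of_nonneg_left h2 h1α
        _ = ((Lφ : ℝ) / α) * ‖((⇑f - ⇑g) ⋆[Lmul, μ] W) x‖ := by ring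
    have hintdist : Integrable (fun x => dist (N f x) (N g x)) μ := by
      have := ((hNint _ hf).sub (hNint _ hg)).norm
      refine this.congr (Filter.Eventually.of_forall fun x => ?_)
      simp only [Pi.sub_apply, dist_eq_norm]
    calc ∫ x, dist (N f x) (N g x) ∂μ
        ≤ ∫ x, ((Lφ : ℝ) / α) * ‖((⇑f - ⇑g) ⋆[Lmul, μ] W) x‖ ∂μ :=
          integral_mono_ae hintdist (hconvh.norm.const_mul _) hptbd
      _ = ((Lφ : ℝ) / α) * ∫ x, ‖((⇑f - ⇑g) ⋆[Lmul, μ] W) x‖ ∂μ := integral_const_mul _ _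
      _ ≤ ((Lφ : ℝ) / α) * ((∫ x, ‖(⇑f - ⇑g) x‖ ∂μ) * I) :=
          mul_le_mul_of_nonneg_left (conv_norm_bound hW hh) (by positivity)
      _ = (K : ℝ) * ∫ x, ‖(⇑f - ⇑g) x‖ ∂μ := by
          rw [hKdef]; push_cast; show _ = ((Lφ : ℝ) * I / α) * _; ring
      _ = (K : ℝ) * dist f g := by
          rw [L1.dist_eq_integral_dist]
          congr 1
  have hC : ContractingWith K T := ⟨hK1, hlip⟩
  -- fixed point
  set F := ContractingWith.fixedPoint T hC with hF
  have hFfix : T F = F := hC.fixedPoint_isFixedPt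
  have hUint : Integrable (⇑F) μ := L1.integrable_coeFn F
  have hUae : (⇑F : ℤ_[p] → ℝ) =ᵐ[μ] N ⇑F := by
    have h1 : (T F : ℤ_[p] → ℝ) =ᵐ[μ] N ⇑F := hTcoe F
    rw [hFfix] at h1
    exact h1
  refine ⟨⇑F, ⟨hUint, ?_⟩, ?_⟩
  · rw [← hNeq ⇑F]; exact hUae
  · intro V hV hVfix
    rw [← hNeq V] at hVfix
    set gV : ℤ_[p] →₁[μ] ℝ := hV.toL1 V with hgV
    have hgVcoe : (gV : ℤ_[p] → ℝ) =ᵐ[μ] V := hV.coeFn_toL1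
    have hfix : T gV = gV := by
      apply Lp.ext
      have h1 : (T gV : ℤ_[p] → ℝ) =ᵐ[μ] N ⇑gV := hTcoe gV
      have h2 : N ⇑gV = N V := hNcongr _ _ hgVcoe
      calc (T gV : ℤ_[p] → ℝ) =ᵐ[μ] N V := by rw [← h2]; exact h1
        _ =ᵐ[μ] V := hVfix.symm
        _ =ᵐ[μ] gV := hgVcoe.symm
    have heq : gV = F := hC.fixedPoint_unique hfix
    calc V =ᵐ[μ] ⇑gV := hgVcoe.symm
      _ =ᵐ[μ] ⇑F := by rw [heq]

end Aux

theorem stmt3 (p : ℕ) [Fact p.Prime] (α : ℝ) (hα : 0 < α)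
    (W : ℤ_[p] → ℝ) (hW : Integrable W (haarZp p))
    (hWradial : ∀ x y : ℤ_[p], ‖x‖ = ‖y‖ → W x = W y)
    (Z : ℤ_[p] → ℝ) (hZ : Integrable Z (haarZp p))
    (Lφ : NNReal) (φ : ℝ → ℝ) (hφ : LipschitzWith Lφ φ)
    (hcontr : (Lφ : ℝ) * (∫ x, ‖W x‖ ∂(haarZp p)) / α < 1) :
    ∃ U : ℤ_[p] → ℝ, (Integrable U (haarZp p) ∧
        U =ᵐ[haarZp p]
          fun x => (1 / α) * φ ((∫ y, W (x - y) * U y ∂(haarZp p)) + Z x)) ∧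
      ∀ V : ℤ_[p] → ℝ, Integrable V (haarZp p) →
        (V =ᵐ[haarZp p]
          fun x => (1 / α) * φ ((∫ y, W (x - y) * V y ∂(haarZp p)) + Z x)) →
        V =ᵐ[haarZp p] U :=
  stmt3_aux α hα W hW Z hZ Lφ φ hφ hcontr
end

section
/- Let p be a prime, M ≥ 1 an integer, and F : [0,1] → ℂ continuous, viewed radially on ℤ_p. Then F(|·|_p) * 1_{S_0} = [(1 − 2p^{-1})F(1) + (1 − p^{-1}) Σ_{k=1}^{∞} p^{-k} F(p^{-k})] · 1_{S_0} + (1 − p^{-1}) F(1) · (Σ_{j=1}^{M} 1_{S_{-j}} + Ω(p^{M+1}|·|_p)). -/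
open MeasureTheory

/-- The radial function `x ↦ F(|x|_p)` on ℤ_p associated to `F : [0,1] → ℂ`. -/
noncomputable def radial (p : ℕ) [Fact p.Prime] (F : Set.Icc (0:ℝ) 1 → ℂ)
    (x : ℤ_[p]) : ℂ :=
  F ⟨‖x‖, ⟨norm_nonneg x, PadicInt.norm_le_one x⟩⟩

lemma pow_mem_Icc (p : ℕ) [Fact p.Prime] (j : ℕ) :
    ((p:ℝ))^(-(j:ℤ)) ∈ Set.Icc (0:ℝ) 1 := by
  have hp : (1:ℝ) ≤ p := by exact_mod_cast (Fact.out : p.Prime).one_le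
  exact ⟨by positivity, zpow_le_one_of_nonpos₀ hp (by simp)⟩

/-- The value F(p^{-j}). -/
noncomputable def Fval (p : ℕ) [Fact p.Prime] (F : Set.Icc (0:ℝ) 1 → ℂ) (j : ℕ) : ℂ :=
  F ⟨(p:ℝ)^(-(j:ℤ)), pow_mem_Icc p j⟩

/-- The sphere of radius p^{-j} centered at the origin in ℤ_p. -/
def sphereZp (p : ℕ) [Fact p.Prime] (j : ℕ) : Set ℤ_[p] :=
  {x : ℤ_[p] | ‖x‖ = (p:ℝ)^(-(j:ℤ))}

/-- The ball {x : |x|_p ≤ p^{-m}} in ℤ_p. -/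
def ballZp (p : ℕ) [Fact p.Prime] (m : ℕ) : Set ℤ_[p] :=
  {x : ℤ_[p] | ‖x‖ ≤ (p:ℝ)^(-(m:ℤ))}


open scoped ENNReal

instance (p : ℕ) [Fact p.Prime] : (haarZp p).IsAddHaarMeasure :=
  Measure.isAddHaarMeasure_addHaarMeasure _

instance (p : ℕ) [Fact p.Prime] : (haarZp p).Regular := by
  unfold haarZp; infer_instance

instance (p : ℕ) [Fact p.Prime] : IsProbabilityMeasure (haarZp p) :=
  ⟨by exact Measure.addHaarMeasure_self (K₀ := ⟨⟨Set.univ, isCompact_univ⟩, by simp⟩)⟩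

section aux
variable (p : ℕ) [Fact p.Prime]

lemma measurableSet_ballZ (m : ℕ) : MeasurableSet (ballZp p m) :=
  (IsClosed.preimage continuous_norm isClosed_Iic).measurableSet

lemma haar_ball (m : ℕ) : haarZp p (ballZp p m) = ((p:ℝ≥0∞)^m)⁻¹ := by
  have hp := (Fact.out : p.Prime)
  have hcover : (Set.univ : Set ℤ_[p]) = ⋃ k ∈ Finset.range (p^m),
      (fun x => -((k:ℤ_[p])) + x) ⁻¹' (ballZp p m) := by
    ext x
    simp only [Set.mem_univ, true_iff, Set.mem_iUnion, Set.mem_preimage, Finset.mem_range]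
    refine ⟨x.appr m, x.appr_lt m, ?_⟩
    show ‖-(x.appr m : ℤ_[p]) + x‖ ≤ _
    rw [neg_add_eq_sub, PadicInt.norm_le_pow_iff_mem_span_pow]
    exact x.appr_spec m
  have hdisj : Set.Pairwise (↑(Finset.range (p^m)))
      (Function.onFun Disjoint (fun k : ℕ => (fun x => -((k:ℤ_[p])) + x) ⁻¹' (ballZp p m))) := by
    intro a ha b hb hab
    simp only [Finset.coe_range, Set.mem_Iio] at ha hb
    refine Set.disjoint_left.2 fun x hxa hxb => hab ?_
    have hxa' : ‖x - (a:ℤ_[p])‖ ≤ (p:ℝ)^(-(m:ℤ)) := by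
      have h := hxa; simp only [Set.mem_preimage, neg_add_eq_sub] at h; exact h
    have hxb' : ‖x - (b:ℤ_[p])‖ ≤ (p:ℝ)^(-(m:ℤ)) := by
      have h := hxb; simp only [Set.mem_preimage, neg_add_eq_sub] at h; exact h
    have hd : ‖(((a:ℤ) - b : ℤ) : ℤ_[p])‖ ≤ (p:ℝ)^(-(m:ℤ)) := by
      have he : (((a:ℤ) - b : ℤ) : ℤ_[p]) = (x - (b:ℤ_[p])) + (-(x - (a:ℤ_[p]))) := by
        push_cast; ring
      rw [he]
      exact le_trans (PadicInt.nonarchimedean _ _)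
        (max_le hxb' (by rw [norm_neg]; exact hxa'))
    rw [PadicInt.norm_int_le_pow_iff_dvd] at hd
    have ha' : ((a:ℤ)) < ((p^m : ℕ) : ℤ) := by exact_mod_cast ha
    have hb' : ((b:ℤ)) < ((p^m : ℕ) : ℤ) := by exact_mod_cast hb
    have ha0 : (0:ℤ) ≤ (a:ℤ) := Int.natCast_nonneg a
    have hb0 : (0:ℤ) ≤ (b:ℤ) := Int.natCast_nonneg b
    have habs : |(a:ℤ) - b| < ((p^m : ℕ) : ℤ) := by
      rw [abs_sub_lt_iff]; omega
    have hz := Int.eq_zero_of_abs_lt_dvd (by exact_mod_cast hd) habs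
    omega
  have hmeas : ∀ k : ℕ, k ∈ Finset.range (p^m) →
      MeasurableSet ((fun x => -((k:ℤ_[p])) + x) ⁻¹' (ballZp p m)) := by
    intro k _
    exact (measurableSet_ballZ p m).preimage (measurable_const_add _)
  have h1 : (1 : ℝ≥0∞) = ∑ k ∈ Finset.range (p^m),
      haarZp p ((fun x => -((k:ℤ_[p])) + x) ⁻¹' (ballZp p m)) := by
    rw [← measure_biUnion_finset hdisj hmeas, ← hcover, measure_univ]
  have h2 : ∀ k : ℕ, haarZp p ((fun x => -((k:ℤ_[p])) + x) ⁻¹' (ballZp p m))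
      = haarZp p (ballZp p m) := fun k => measure_preimage_add _ _ _
  simp only [h2, Finset.sum_const, Finset.card_range, nsmul_eq_mul] at h1
  have hne : ((p:ℝ≥0∞))^m ≠ 0 := by
    simp [hp.ne_zero]
  have hnetop : ((p:ℝ≥0∞))^m ≠ ⊤ := by
    exact ENNReal.pow_ne_top (ENNReal.natCast_ne_top p)
  calc haarZp p (ballZp p m) = ((p:ℝ≥0∞)^m)⁻¹ * ((p^m : ℕ) * haarZp p (ballZp p m)) := by
        push_cast
        rw [← mul_assoc, ENNReal.inv_mul_cancel hne hnetop, one_mul]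
    _ = ((p:ℝ≥0∞)^m)⁻¹ := by rw [← h1, mul_one]


lemma hp1R : (1:ℝ) < p := by exact_mod_cast (Fact.out : p.Prime).one_lt

lemma mem_ball_iffZ (m : ℕ) (x : ℤ_[p]) :
    x ∈ ballZp p m ↔ x = 0 ∨ (m:ℤ) ≤ x.valuation := by
  constructor
  · intro h
    by_cases hx : x = 0
    · exact Or.inl hx
    · exact Or.inr (by exact_mod_cast (PadicInt.norm_le_pow_iff_le_valuation x hx m).1 h)
  · rintro (rfl | h)
    · show ‖(0:ℤ_[p])‖ ≤ _
      simp
    · by_cases hx : x = 0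
      · subst hx; show ‖(0:ℤ_[p])‖ ≤ _; simp
      · exact (PadicInt.norm_le_pow_iff_le_valuation x hx m).2 (by exact_mod_cast h)

lemma mem_sphere_iffZ (j : ℕ) (x : ℤ_[p]) :
    x ∈ sphereZp p j ↔ x ≠ 0 ∧ x.valuation = j := by
  constructor
  · intro h
    have hx : x ≠ 0 := by
      intro h0; subst h0
      have : (0:ℝ) = (p:ℝ)^(-(j:ℤ)) := by simpa [sphereZp] using h
      have := (zpow_pos (by linarith [hp1R p] : (0:ℝ) < p) (-(j:ℤ)))
      linarith
    refine ⟨hx, ?_⟩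
    have h1 : (j:ℤ) ≤ x.valuation :=
      by exact_mod_cast (PadicInt.norm_le_pow_iff_le_valuation x hx j).1 (le_of_eq h)
    have h2 : ¬ ((j:ℤ)+1 ≤ x.valuation) := by
      intro hc
      have hle : ‖x‖ ≤ (p:ℝ)^(-((j+1:ℕ):ℤ)) := by
        apply (PadicInt.norm_le_pow_iff_le_valuation x hx (j+1)).2
        push_cast; omega
      have hlt : (p:ℝ)^(-((j+1:ℕ):ℤ)) < (p:ℝ)^(-(j:ℤ)) := by
        apply zpow_lt_zpow_right₀ (hp1R p)
        push_cast; omega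
      have := h ▸ hle
      linarith [lt_of_le_of_lt this hlt, le_refl (‖x‖)]
    omega
  · rintro ⟨hx, hv⟩
    show ‖x‖ = _
    rw [PadicInt.norm_eq_zpow_neg_valuation hx, hv]

lemma sphere_eq_diff (j : ℕ) :
    sphereZp p j = ballZp p j \ ballZp p (j+1) := by
  ext x
  rw [mem_sphere_iffZ, Set.mem_diff, mem_ball_iffZ, mem_ball_iffZ]
  constructor
  · rintro ⟨hx, hv⟩
    refine ⟨Or.inr (by omega), ?_⟩
    rintro (rfl | h)
    · exact hx rfl
    · push_cast at h; omega
  · rintro ⟨h1, h2⟩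
    push_neg at h2
    obtain ⟨hx0, hle⟩ := h2
    rcases h1 with rfl | h1
    · exact absurd rfl hx0
    · push_cast at hle
      exact ⟨hx0, by omega⟩

lemma measurableSet_sphereZ (j : ℕ) : MeasurableSet (sphereZp p j) :=
  (IsClosed.preimage continuous_norm isClosed_singleton).measurableSet

lemma haar_ball_ne_top (m : ℕ) : haarZp p (ballZp p m) ≠ ⊤ := by
  rw [haar_ball]
  simp [(Fact.out : p.Prime).ne_zero]

lemma haar_sphere (j : ℕ) :
    haarZp p (sphereZp p j) = ((p:ℝ≥0∞)^j)⁻¹ - ((p:ℝ≥0∞)^(j+1))⁻¹ := by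
  rw [sphere_eq_diff]
  rw [measure_diff ?_ ?_ (haar_ball_ne_top p (j+1))]
  · rw [haar_ball, haar_ball]
  · intro x hx
    rw [mem_ball_iffZ] at hx ⊢
    rcases hx with rfl | h
    · exact Or.inl rfl
    · right; omega
  · exact (measurableSet_ballZ p (j+1)).nullMeasurableSet

lemma haar_ball_toReal (m : ℕ) : (haarZp p (ballZp p m)).toReal = (p:ℝ)^(-(m:ℤ)) := by
  rw [haar_ball, zpow_neg, zpow_natCast, ENNReal.toReal_inv]
  norm_num

lemma haar_sphere_toReal (j : ℕ) :
    (haarZp p (sphereZp p j)).toReal = (p:ℝ)^(-(j:ℤ)) - (p:ℝ)^(-(j:ℤ)-1) := by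
  have h1 : ((p:ℝ≥0∞)^(j+1))⁻¹ ≤ ((p:ℝ≥0∞)^j)⁻¹ := by
    apply ENNReal.inv_le_inv.2
    apply pow_le_pow_right₀ (by exact_mod_cast (Fact.out : p.Prime).one_le) (by omega)
  rw [haar_sphere, ENNReal.toReal_sub_of_le h1 (by simp [(Fact.out : p.Prime).ne_zero])]
  have hpos : (0:ℝ) < p := by linarith [hp1R p]
  congr 1
  · rw [ENNReal.toReal_inv, zpow_neg, zpow_natCast]; norm_num
  · rw [ENNReal.toReal_inv]
    rw [show -(j:ℤ)-1 = -((j+1:ℕ):ℤ) by push_cast; ring, zpow_neg, zpow_natCast]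
    norm_num

lemma haar_zero : haarZp p {(0:ℤ_[p])} = 0 := by
  have hb : ∀ m : ℕ, (haarZp p {(0:ℤ_[p])}).toReal ≤ ((p:ℝ)⁻¹)^m := by
    intro m
    have hsub : {(0:ℤ_[p])} ⊆ ballZp p m := by
      intro x hx
      simp only [Set.mem_singleton_iff] at hx
      rw [mem_ball_iffZ]
      exact Or.inl hx
    have := measure_mono (μ := haarZp p) hsub
    have h2 := ENNReal.toReal_mono (haar_ball_ne_top p m) this
    rw [haar_ball_toReal] at h2
    rwa [zpow_neg, zpow_natCast, ← inv_pow] at h2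
  have hpos : (0:ℝ) < p := by linarith [hp1R p]
  have htend : Filter.Tendsto (fun m : ℕ => ((p:ℝ)⁻¹)^m) Filter.atTop (nhds 0) := by
    apply tendsto_pow_atTop_nhds_zero_of_lt_one (by positivity)
    rw [inv_lt_one_iff₀]; right; exact hp1R p
  have hle : (haarZp p {(0:ℤ_[p])}).toReal ≤ 0 :=
    ge_of_tendsto' htend hb
  have h0 : (haarZp p {(0:ℤ_[p])}).toReal = 0 :=
    le_antisymm hle ENNReal.toReal_nonneg
  rcases (ENNReal.toReal_eq_zero_iff _).1 h0 with h | h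
  · exact h
  · exact absurd h (measure_ne_top _ _)


lemma radial_continuous (F : Set.Icc (0:ℝ) 1 → ℂ) (hF : Continuous F) :
    Continuous (radial p F) := hF.comp (continuous_norm.subtype_mk _)

lemma radial_integrable (F : Set.Icc (0:ℝ) 1 → ℂ) (hF : Continuous F) :
    Integrable (radial p F) (haarZp p) := by
  rw [← integrableOn_univ]
  exact (radial_continuous p F hF).continuousOn.integrableOn_compact isCompact_univ

lemma radial_eq_on_sphere (F : Set.Icc (0:ℝ) 1 → ℂ) (k : ℕ) :
    Set.EqOn (radial p F) (fun _ => Fval p F k) (sphereZp p k) := by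
  intro x hx
  unfold radial Fval
  congr 1
  exact Subtype.ext hx

lemma spheres_disjoint : Pairwise (Function.onFun Disjoint (fun k : ℕ => sphereZp p k)) := by
  intro a b hab
  refine Set.disjoint_left.2 fun x hxa hxb => hab ?_
  rw [mem_sphere_iffZ] at hxa hxb
  omega

lemma union_spheres : (⋃ k : ℕ, sphereZp p k) = {(0:ℤ_[p])}ᶜ := by
  ext x
  simp only [Set.mem_iUnion, Set.mem_compl_iff, Set.mem_singleton_iff]
  constructor
  · rintro ⟨k, hk⟩
    exact ((mem_sphere_iffZ p k x).1 hk).1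
  · intro hx
    refine ⟨x.valuation, (mem_sphere_iffZ p _ x).2 ⟨hx, ?_⟩⟩
    rfl

lemma total_integral (F : Set.Icc (0:ℝ) 1 → ℂ) (hF : Continuous F) :
    ∫ y, radial p F y ∂haarZp p
      = ∑' k : ℕ, ((p:ℝ)^(-(k:ℤ)) - (p:ℝ)^(-(k:ℤ)-1)) • Fval p F k := by
  have hint := radial_integrable p F hF
  have hm : ∀ k : ℕ, MeasurableSet (sphereZp p k) := measurableSet_sphereZ p
  have h1 : ∫ y, radial p F y ∂haarZp p
      = ∫ y in (⋃ k : ℕ, sphereZp p k), radial p F y ∂haarZp p := by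
    rw [union_spheres, ← integral_add_compl
      (MeasurableSet.singleton (0:ℤ_[p])).compl hint, compl_compl,
      show ((haarZp p).restrict {(0:ℤ_[p])}) = 0 from
        Measure.restrict_eq_zero.2 (haar_zero p),
      integral_zero_measure, add_zero]
  rw [h1, integral_iUnion hm (spheres_disjoint p) hint.integrableOn]
  congr 1
  ext k
  rw [setIntegral_congr_fun (hm k) (radial_eq_on_sphere p F k),
    setIntegral_const, measureReal_def, haar_sphere_toReal]


lemma norm_sub_of_norm_lt {x y : ℤ_[p]} (h : ‖y‖ < ‖x‖) : ‖x - y‖ = ‖x‖ := by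
  apply le_antisymm
  · calc ‖x - y‖ = ‖x + (-y)‖ := by ring_nf
      _ ≤ max ‖x‖ ‖(-y)‖ := PadicInt.nonarchimedean _ _
      _ = ‖x‖ := by rw [norm_neg]; exact max_eq_left h.le
  · by_contra hc
    push_neg at hc
    have : ‖x‖ ≤ max ‖x - y‖ ‖y‖ := by
      calc ‖x‖ = ‖(x - y) + y‖ := by ring_nf
        _ ≤ max ‖x - y‖ ‖y‖ := PadicInt.nonarchimedean _ _
    rcases max_cases ‖x - y‖ ‖y‖ with ⟨he, _⟩ | ⟨he, _⟩ <;> rw [he] at this <;> linarith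

lemma mem_ball_one_of_ne_one {x : ℤ_[p]} (h : ‖x‖ ≠ 1) : x ∈ ballZp p 1 := by
  rw [mem_ball_iffZ]
  by_cases hx : x = 0
  · exact Or.inl hx
  · right
    have hv : (0:ℤ) ≤ x.valuation := Int.natCast_nonneg _
    rcases eq_or_lt_of_le hv with he | hlt
    · exfalso
      apply h
      rw [PadicInt.norm_eq_zpow_neg_valuation hx, ← he]
      norm_num
    · omega

lemma mem_sphere_zero_iff (x : ℤ_[p]) : x ∈ sphereZp p 0 ↔ ‖x‖ = 1 := by
  show ‖x‖ = (p:ℝ)^(-(0:ℕ):ℤ) ↔ _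
  norm_num

lemma bracket_eq_one {x : ℤ_[p]} (M : ℕ) (hM : 1 ≤ M) (hx : ‖x‖ ≠ 1) :
    ((∑ j ∈ Finset.Icc 1 M, Set.indicator (sphereZp p j) (fun _ => (1:ℂ)) x) +
      Set.indicator (ballZp p (M+1)) (fun _ => (1:ℂ)) x) = 1 := by
  have hx1 : x ∈ ballZp p 1 := mem_ball_one_of_ne_one p hx
  rw [mem_ball_iffZ] at hx1
  by_cases hb : x ∈ ballZp p (M+1)
  · rw [Set.indicator_of_mem hb]
    have : ∀ j ∈ Finset.Icc 1 M, Set.indicator (sphereZp p j) (fun _ => (1:ℂ)) x = 0 := by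
      intro j hj
      rw [Finset.mem_Icc] at hj
      apply Set.indicator_of_notMem
      rw [mem_sphere_iffZ]
      rintro ⟨hx0, hv⟩
      rw [mem_ball_iffZ] at hb
      rcases hb with rfl | hble
      · exact hx0 rfl
      · rw [hv] at hble
        push_cast at hble
        omega
    rw [Finset.sum_congr rfl this]
    simp
  · rw [Set.indicator_of_notMem hb, add_zero]
    rw [mem_ball_iffZ] at hb
    push_neg at hb
    obtain ⟨hx0, hble⟩ := hb
    rcases hx1 with rfl | hv1
    · exact absurd rfl hx0
    have hvM : x.valuation ≤ M := by push_cast at hble; omega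
    set j := x.valuation with hj
    have hjv : j = x.valuation := rfl
    have hjmem : j ∈ Finset.Icc 1 M := by
      rw [Finset.mem_Icc]
      omega
    rw [Finset.sum_eq_single_of_mem j hjmem]
    · rw [Set.indicator_of_mem ((mem_sphere_iffZ p j x).2 ⟨hx0, hjv.symm⟩)]
    · intro b _ hbj
      apply Set.indicator_of_notMem
      rw [mem_sphere_iffZ]
      rintro ⟨_, hvb⟩
      apply hbj
      omega


lemma lhs_caseB (F : Set.Icc (0:ℝ) 1 → ℂ) (hF : Continuous F) {x : ℤ_[p]}
    (hx : ‖x‖ ≠ 1) :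
    (∫ y, radial p F (x - y) *
        Set.indicator (sphereZp p 0) (fun _ => (1:ℂ)) y ∂(haarZp p)) =
      (1 - (p:ℝ)⁻¹) • Fval p F 0 := by
  have hpt : ∀ y, radial p F (x - y) * Set.indicator (sphereZp p 0) (fun _ => (1:ℂ)) y
      = Set.indicator (sphereZp p 0) (fun _ => Fval p F 0) y := by
    intro y
    by_cases hy : y ∈ sphereZp p 0
    · rw [Set.indicator_of_mem hy, Set.indicator_of_mem hy, mul_one]
      have hy1 : ‖y‖ = 1 := (mem_sphere_zero_iff p y).1 hy
      have hxy : ‖x - y‖ = 1 := by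
        rw [show x - y = -(y - x) by ring, norm_neg,
          norm_sub_of_norm_lt p (by rw [hy1]; exact lt_of_le_of_ne (PadicInt.norm_le_one x) hx)]
        exact hy1
      unfold radial Fval
      congr 1
      apply Subtype.ext
      simp [hxy]
    · rw [Set.indicator_of_notMem hy, Set.indicator_of_notMem hy, mul_zero]
  rw [integral_congr_ae (Filter.Eventually.of_forall hpt),
    integral_indicator_const _ (measurableSet_sphereZ p 0), measureReal_def, haar_sphere_toReal]
  norm_num

end aux

theorem stmt13 (p : ℕ) [Fact p.Prime] (M : ℕ) (hM : 1 ≤ M)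
    (F : Set.Icc (0:ℝ) 1 → ℂ) (hF : Continuous F) (x : ℤ_[p]) :
    (∫ y, radial p F (x - y) *
        Set.indicator (sphereZp p 0) (fun _ => (1:ℂ)) y ∂(haarZp p)) =
      ((1 - 2 * (p:ℂ)⁻¹) * Fval p F 0 +
          (1 - (p:ℂ)⁻¹) * ∑' k : ℕ, (p:ℂ)^(-((k:ℤ)+1)) * Fval p F (k + 1)) *
        Set.indicator (sphereZp p 0) (fun _ => (1:ℂ)) x +
      (1 - (p:ℂ)⁻¹) * Fval p F 0 *
        ((∑ j ∈ Finset.Icc 1 M, Set.indicator (sphereZp p j) (fun _ => (1:ℂ)) x) +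
          Set.indicator (ballZp p (M+1)) (fun _ => (1:ℂ)) x) := by
  by_cases hx1 : ‖x‖ = 1
  · -- case ‖x‖ = 1
    have hxS0 : x ∈ sphereZp p 0 := (mem_sphere_zero_iff p x).2 hx1
    have hx0 : x ≠ 0 := ((mem_sphere_iffZ p 0 x).1 hxS0).1
    have hv0 : x.valuation = 0 := by
      have := ((mem_sphere_iffZ p 0 x).1 hxS0).2
      exact_mod_cast this
    have hind0 : Set.indicator (sphereZp p 0) (fun _ => (1:ℂ)) x = 1 :=
      Set.indicator_of_mem hxS0 _
    have hsum0 : ∀ j ∈ Finset.Icc 1 M, Set.indicator (sphereZp p j) (fun _ => (1:ℂ)) x = 0 := by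
      intro j hj
      rw [Finset.mem_Icc] at hj
      apply Set.indicator_of_notMem
      rw [mem_sphere_iffZ]
      rintro ⟨_, hv⟩
      rw [hv0] at hv
      omega
    have hball0 : Set.indicator (ballZp p (M+1)) (fun _ => (1:ℂ)) x = 0 := by
      apply Set.indicator_of_notMem
      rw [mem_ball_iffZ]
      rintro (rfl | h)
      · exact hx0 rfl
      · rw [hv0] at h; omega
    -- pointwise identity for the integrand
    have hpt : ∀ y, radial p F (x - y) * Set.indicator (sphereZp p 0) (fun _ => (1:ℂ)) y
        = radial p F (x - y) - Set.indicator (ballZp p 1) (fun _ => Fval p F 0) y := by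
      intro y
      by_cases hy : ‖y‖ = 1
      · rw [Set.indicator_of_mem ((mem_sphere_zero_iff p y).2 hy), mul_one,
          Set.indicator_of_notMem, sub_zero]
        rw [mem_ball_iffZ]
        have hy0 : y ≠ 0 := by
          intro h0; rw [h0] at hy; simp at hy
        have hyv : y.valuation = 0 := by
          have := ((mem_sphere_iffZ p 0 y).1 ((mem_sphere_zero_iff p y).2 hy)).2
          exact_mod_cast this
        rintro (rfl | h)
        · exact hy0 rfl
        · rw [hyv] at h; omega
      · rw [Set.indicator_of_notMem (fun hc => hy ((mem_sphere_zero_iff p y).1 hc)), mul_zero,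
          Set.indicator_of_mem (mem_ball_one_of_ne_one p hy)]
        have hxy : ‖x - y‖ = 1 := by
          rw [norm_sub_of_norm_lt p (by
            rw [hx1]; exact lt_of_le_of_ne (PadicInt.norm_le_one y) hy)]
          exact hx1
        have hr : radial p F (x - y) = Fval p F 0 := by
          unfold radial Fval
          congr 1
          apply Subtype.ext
          simp [hxy]
        rw [hr, sub_self]
    have hint1 : Integrable (fun y => radial p F (x - y)) (haarZp p) := by
      rw [← integrableOn_univ]
      exact (((radial_continuous p F hF).comp
        (continuous_const.sub continuous_id))).continuousOn.integrableOn_compact isCompact_univ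
    have hint2 : Integrable (Set.indicator (ballZp p 1) (fun _ => Fval p F 0)) (haarZp p) :=
      (integrable_const (Fval p F 0)).indicator (measurableSet_ballZ p 1)
    have hLHS : (∫ y, radial p F (x - y) *
        Set.indicator (sphereZp p 0) (fun _ => (1:ℂ)) y ∂(haarZp p))
        = (∑' k : ℕ, ((p:ℝ)^(-(k:ℤ)) - (p:ℝ)^(-(k:ℤ)-1)) • Fval p F k)
          - (p:ℝ)^(-(1:ℤ)) • Fval p F 0 := by
      rw [integral_congr_ae (Filter.Eventually.of_forall hpt), integral_sub hint1 hint2,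
        integral_sub_left_eq_self (radial p F) _ x,
        integral_indicator_const _ (measurableSet_ballZ p 1),
        total_integral p F hF, measureReal_def, haar_ball_toReal]
      norm_num
    -- summability
    obtain ⟨C, hC⟩ : ∃ C : ℝ, ∀ t, ‖F t‖ ≤ C := by
      obtain ⟨C, hC⟩ := isCompact_univ.exists_bound_of_continuousOn hF.continuousOn
      exact ⟨C, fun t => hC t (Set.mem_univ t)⟩
    have hp0 : (0:ℝ) < p := by linarith [hp1R p]
    have hinv1 : (p:ℝ)⁻¹ < 1 := by
      rw [inv_lt_one_iff₀]; right; exact hp1R p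
    have hsumm : Summable (fun k : ℕ => ((p:ℝ)^(-(k:ℤ)) - (p:ℝ)^(-(k:ℤ)-1)) • Fval p F k) := by
      apply Summable.of_norm_bounded (g := fun k => ((p:ℝ)⁻¹)^k * C)
      · exact (summable_geometric_of_lt_one (by positivity) hinv1).mul_right C
      · intro k
        rw [norm_smul, Real.norm_eq_abs]
        have h1 : (0:ℝ) ≤ (p:ℝ)^(-(k:ℤ)) - (p:ℝ)^(-(k:ℤ)-1) :=
          sub_nonneg.2 (zpow_le_zpow_right₀ (le_of_lt (hp1R p)) (by omega))
        rw [abs_of_nonneg h1]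
        have h2 : (p:ℝ)^(-(k:ℤ)) - (p:ℝ)^(-(k:ℤ)-1) ≤ ((p:ℝ)⁻¹)^k := by
          have : (p:ℝ)^(-(k:ℤ)) = ((p:ℝ)⁻¹)^k := by
            rw [zpow_neg, inv_pow, zpow_natCast]
          rw [this] at h1 ⊢
          nlinarith [zpow_pos hp0 (-(k:ℤ)-1)]
        have h3 : (0:ℝ) ≤ ‖Fval p F k‖ := norm_nonneg _
        exact mul_le_mul h2 (hC _) h3 (by positivity)
    rw [hLHS, hind0, Finset.sum_congr rfl hsum0, hball0]
    rw [hsumm.tsum_eq_zero_add]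
    have hterm : ∀ k : ℕ, ((p:ℝ)^(-((k+1:ℕ):ℤ)) - (p:ℝ)^(-((k+1:ℕ):ℤ)-1)) • Fval p F (k+1)
        = (1 - (p:ℂ)⁻¹) * ((p:ℂ)^(-((k:ℤ)+1)) * Fval p F (k + 1)) := by
      intro k
      have hpc : (p:ℂ) ≠ 0 := by
        exact_mod_cast Nat.cast_ne_zero.2 (Fact.out : p.Prime).ne_zero
      rw [Complex.real_smul]
      push_cast
      rw [show (-((k:ℤ)+1)-1 : ℤ) = (-((k:ℤ)+1)) - 1 from rfl,
        zpow_sub_one₀ hpc (-((k:ℤ)+1))]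
      ring
    rw [tsum_congr hterm, tsum_mul_left]
    have hpc : ((p:ℝ) : ℂ) = (p:ℂ) := by push_cast; ring
    rw [Complex.real_smul, Complex.real_smul]
    push_cast
    simp only [Nat.cast_zero, neg_zero, zpow_zero, zpow_neg_one, Finset.sum_const_zero]
    ring
  · -- case ‖x‖ < 1
    rw [lhs_caseB p F hF hx1,
      Set.indicator_of_notMem (fun hc => hx1 ((mem_sphere_zero_iff p x).1 hc)),
      bracket_eq_one p M hM hx1, Complex.real_smul]
    push_cast
    ring
end
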